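/- arXiv:2104.06151 — 2 statements merged into one kernel-verified Lean document; each statement's English description precedes it below -/
import Mathlib

section
/- Let G be a group, φ : G → ℤ a surjective group homomorphism, g ∈ G with φ(g) = 1, and n ≥ 1 an integer such that gⁿ commutes with every element of ker φ. Let L₀ be a subgroup of ker φ, and set Lᵢ = g^{-i} L₀ g^{i} for 0 ≤ i ≤ n−1. Assume that for all i ≠ j every element of Lᵢ commutes with every element of Lⱼ. Then the map ξ : L₀ ≀ₙ ℤ → G defined by ξ(b₀, b₁, …, b_{n−1}; k) = b₀ (g^{-1} b₁ g) (g^{-2} b₂ g^{2}) ⋯ (g^{-(n−1)} b_{n−1} g^{n−1}) · g^{k} is a group homomorphism. -/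
open Pointwise

open Fin.IntCast in
/-- The multiplication of the wreath product `H ≀ₙ ℤ`: the underlying set is
`(Fin n → H) × ℤ` and `(b, k) * (b', k') = (b · α(b'; k), k + k')`, where
`α(b'; k) i = b' (i + k)`, indices taken modulo `n` (this is the semidirect product
`Hⁿ ⋊ ℤ` with respect to the cyclic-shift action of `ℤ` on `Hⁿ`). -/
def wreathMul {H : Type*} [Group H] {n : ℕ} [NeZero n]
    (p q : (Fin n → H) × ℤ) : (Fin n → H) × ℤ :=
  (p.1 * fun i : Fin n => q.1 (i + (p.2 : Fin n)), p.2 + q.2)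

/-- The map `ξ : L₀ ≀ₙ ℤ → G`,
`ξ(b₀, …, b_{n-1}; k) = b₀ (g⁻¹ b₁ g) (g⁻² b₂ g²) ⋯ (g^{-(n-1)} b_{n-1} g^{n-1}) · g ^ k`. -/
def wreathToGroup {G : Type*} [Group G] (g : G) (n : ℕ) (L₀ : Subgroup G)
    (p : (Fin n → L₀) × ℤ) : G :=
  ((List.finRange n).map fun i : Fin n =>
    (g ^ (i : ℕ))⁻¹ * ((p.1 i : G)) * g ^ (i : ℕ)).prod * g ^ p.2

private lemma list_prod_mul_aux {G : Type*} [Group G] {ι : Type*} (f h : ι → G) :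
    ∀ (l : List ι), l.Nodup →
    (∀ i ∈ l, ∀ j ∈ l, i ≠ j → Commute (f i) (h j)) →
    (l.map fun i => f i * h i).prod = (l.map f).prod * (l.map h).prod
  | [], _, _ => by simp
  | a :: t, hnd, hc => by
    simp only [List.map_cons, List.prod_cons]
    rw [list_prod_mul_aux f h t hnd.of_cons
      (fun i hi j hj hij => hc i (List.mem_cons_of_mem _ hi) j (List.mem_cons_of_mem _ hj) hij)]
    have hcom : Commute (h a) ((t.map f).prod) := by
      refine Commute.list_prod_right _ _ ?_
      intro x hx
      obtain ⟨j, hj, rfl⟩ := List.mem_map.mp hx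
      exact (hc j (List.mem_cons_of_mem _ hj) a List.mem_cons_self
        (fun e => (List.nodup_cons.mp hnd).1 (e ▸ hj))).symm
    calc f a * h a * ((t.map f).prod * (t.map h).prod)
        = f a * (h a * (t.map f).prod) * (t.map h).prod := by group
      _ = f a * ((t.map f).prod * h a) * (t.map h).prod := by rw [hcom.eq]
      _ = f a * (t.map f).prod * (h a * (t.map h).prod) := by group

private lemma fin_val_add_modEq {n : ℕ} [NeZero n] (a b : Fin n) :
    (((a + b : Fin n) : ℕ) : ℤ) ≡ ((a : ℕ) : ℤ) + ((b : ℕ) : ℤ) [ZMOD n] := by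
  rw [Fin.val_add]
  push_cast [Int.natCast_mod]
  exact Int.emod_emod_of_dvd _ dvd_rfl

private lemma fin_val_sub_modEq {n : ℕ} [NeZero n] (a b : Fin n) :
    (((a - b : Fin n) : ℕ) : ℤ) ≡ ((a : ℕ) : ℤ) - ((b : ℕ) : ℤ) [ZMOD n] := by
  have h := fin_val_add_modEq (a - b) b
  rw [sub_add_cancel] at h
  have h2 := (h.symm).sub_right ((b : ℕ) : ℤ)
  rwa [add_sub_cancel_right] at h2

open Fin.IntCast in
private lemma fin_intCast_modEq (n : ℕ) [NeZero n] (m : ℤ) :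
    (((m : Fin n) : ℕ) : ℤ) ≡ m [ZMOD n] := by
  have hone : (((1 : Fin n) : ℕ) : ℤ) ≡ 1 [ZMOD n] := by
    rw [Fin.val_one' n]
    push_cast [Int.natCast_mod]
    exact Int.emod_emod_of_dvd _ dvd_rfl
  induction m using Int.induction_on with
  | zero => simp [Int.ModEq]
  | succ i ih =>
    open Fin.CommRing in
    have e : ((i + 1 : ℤ) : Fin n) = (i : Fin n) + 1 := by push_cast; ring
    rw [e]
    exact (fin_val_add_modEq _ _).trans (ih.add hone)
  | pred i ih =>
    open Fin.CommRing in
    have e : ((-i - 1 : ℤ) : Fin n) = ((-i : ℤ) : Fin n) - 1 := by push_cast; ring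
    rw [e]
    exact (fin_val_sub_modEq _ _).trans (ih.sub hone)

/-- Let `G` be a group, `φ : G → ℤ` a surjective homomorphism, `g ∈ G`
with `φ g = 1`, and `n ≥ 1` such that `g ^ n` commutes with every element of `ker φ`.
Let `L₀ ≤ ker φ` and `L i = g⁻ⁱ L₀ gⁱ` for `0 ≤ i ≤ n - 1`; assume the subgroups
`L i`, `L j` commute elementwise for `i ≠ j`.  Then
`ξ(b₀, …, b_{n-1}; k) = b₀ (g⁻¹ b₁ g) ⋯ (g^{-(n-1)} b_{n-1} g^{n-1}) g ^ k` is a group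
homomorphism `L₀ ≀ₙ ℤ → G`. -/
theorem wreathToGroup_isHom {G : Type*} [Group G]
    (φ : G →* Multiplicative ℤ) (hφ : Function.Surjective φ)
    (g : G) (hg : φ g = Multiplicative.ofAdd 1)
    (n : ℕ) [NeZero n]
    (L₀ : Subgroup G) (hL₀ : L₀ ≤ φ.ker)
    (hgn : ∀ x ∈ φ.ker, g ^ n * x = x * g ^ n)
    (L : ℕ → Subgroup G) (hL : ∀ i, L i = MulAut.conj (g ^ i)⁻¹ • L₀)
    (hcomm : ∀ i j, i < n → j < n → i ≠ j →
      ∀ x ∈ L i, ∀ y ∈ L j, x * y = y * x) :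
    ∀ p q : (Fin n → L₀) × ℤ,
      wreathToGroup g n L₀ (wreathMul p q)
        = wreathToGroup g n L₀ p * wreathToGroup g n L₀ q := by
  intro p q
  obtain ⟨a, k⟩ := p
  obtain ⟨b, k'⟩ := q
  -- conjugates of kernel elements are in the kernel
  have hconjker : ∀ (x : G), x ∈ φ.ker → ∀ m : ℤ, (g ^ m)⁻¹ * x * g ^ m ∈ φ.ker := by
    intro x hx m
    have := (MonoidHom.normal_ker φ).conj_mem x hx (g ^ m)⁻¹
    simpa [mul_assoc] using this
  -- periodicity of conjugation on the kernel
  have per : ∀ (x : G), x ∈ φ.ker → ∀ m m' : ℤ, m ≡ m' [ZMOD (n : ℕ)] →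
      (g ^ m)⁻¹ * x * g ^ m = (g ^ m')⁻¹ * x * g ^ m' := by
    intro x hx m m' hmm
    obtain ⟨t, ht⟩ := hmm.dvd
    have hm' : m' = m + (n : ℤ) * t := by linarith
    subst hm'
    have hy : (g ^ m)⁻¹ * x * g ^ m ∈ φ.ker := hconjker x hx m
    have hcomm' : g ^ ((n : ℤ) * t) * ((g ^ m)⁻¹ * x * g ^ m)
        = ((g ^ m)⁻¹ * x * g ^ m) * g ^ ((n : ℤ) * t) := by
      have h1 : Commute (g ^ n) ((g ^ m)⁻¹ * x * g ^ m) := hgn _ hy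
      have h2 := h1.zpow_left t
      rwa [← zpow_natCast g n, ← zpow_mul] at h2
    rw [zpow_add]
    have e : (g ^ m * g ^ ((n : ℤ) * t))⁻¹ * x * (g ^ m * g ^ ((n : ℤ) * t))
        = (g ^ ((n : ℤ) * t))⁻¹ * (((g ^ m)⁻¹ * x * g ^ m) * g ^ ((n : ℤ) * t)) := by
      group
    rw [e, ← hcomm']
    group
  open Fin.IntCast in
  have perFin : ∀ (x : G), x ∈ φ.ker → ∀ m : ℤ,
      (g ^ m)⁻¹ * x * g ^ m
        = (g ^ (((m : Fin n) : ℕ)))⁻¹ * x * g ^ (((m : Fin n) : ℕ)) := by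
    intro x hx m
    have h := per x hx m ((((m : Fin n) : ℕ)) : ℤ) (fin_intCast_modEq n m).symm
    simpa only [zpow_natCast] using h
  -- membership in L i
  have hmemL : ∀ (i : ℕ) (x : L₀), (g ^ i)⁻¹ * (x : G) * g ^ i ∈ L i := by
    intro i x
    rw [hL i]
    have heq : (g ^ i)⁻¹ * (x : G) * g ^ i = (MulAut.conj (g ^ i)⁻¹) • (x : G) := by
      rw [MulAut.smul_def, MulAut.conj_apply]
      group
    rw [heq]
    exact Subgroup.smul_mem_pointwise_smul (x : G) (MulAut.conj (g ^ i)⁻¹) L₀ x.2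
  have hcom2 : ∀ (i j : Fin n), i ≠ j → ∀ x y : L₀,
      Commute ((g ^ (i : ℕ))⁻¹ * (x : G) * g ^ (i : ℕ))
        ((g ^ (j : ℕ))⁻¹ * (y : G) * g ^ (j : ℕ)) :=
    fun i j hij x y =>
      hcomm i j i.isLt j.isLt (fun e => hij (Fin.ext e)) _ (hmemL i x) _ (hmemL j y)
  -- notation
  open Fin.IntCast in
  set kk : Fin n := (k : Fin n) with hkk
  -- the three basic list products
  set A : G := ((List.finRange n).map fun i : Fin n =>
    (g ^ (i : ℕ))⁻¹ * ((a i : G)) * g ^ (i : ℕ)).prod with hA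
  set C : G := ((List.finRange n).map fun j : Fin n =>
    (g ^ (j : ℕ))⁻¹ * ((b j : G)) * g ^ (j : ℕ)).prod with hC
  set B : G := ((List.finRange n).map fun i : Fin n =>
    (g ^ (i : ℕ))⁻¹ * ((b (i + kk) : G)) * g ^ (i : ℕ)).prod with hB
  have hgoal : wreathToGroup g n L₀ (wreathMul (a, k) (b, k')) = (A * B) * g ^ (k + k') ∧
      wreathToGroup g n L₀ (a, k) * wreathToGroup g n L₀ (b, k') = (A * g ^ k) * (C * g ^ k') := by
    constructor
    · simp only [wreathToGroup, wreathMul, Pi.mul_apply]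
      congr 1
      have e1 : (fun i : Fin n => (g ^ (i : ℕ))⁻¹ * ((a i * b (i + kk) : L₀) : G) * g ^ (i : ℕ))
          = fun i : Fin n => ((g ^ (i : ℕ))⁻¹ * (a i : G) * g ^ (i : ℕ))
            * ((g ^ (i : ℕ))⁻¹ * (b (i + kk) : G) * g ^ (i : ℕ)) := by
        funext i
        push_cast
        group
      rw [e1]
      exact list_prod_mul_aux _ _ (List.finRange n) (List.nodup_finRange n)
        (fun i _ j _ hij => hcom2 i j hij (a i) (b (j + kk)))
    · rfl
  rw [hgoal.1, hgoal.2]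
  -- the conjugation step : g^k * C * g^{-k} = B
  have hconjC : g ^ k * C * (g ^ k)⁻¹ = B := by
    have hmapped : g ^ k * C * (g ^ k)⁻¹
        = ((List.finRange n).map fun j : Fin n =>
            g ^ k * ((g ^ (j : ℕ))⁻¹ * ((b j : G)) * g ^ (j : ℕ)) * (g ^ k)⁻¹).prod := by
      calc g ^ k * C * (g ^ k)⁻¹ = (MulAut.conj (g ^ k)) C := by
            rw [MulAut.conj_apply]
        _ = (((List.finRange n).map fun j : Fin n =>
              (g ^ (j : ℕ))⁻¹ * ((b j : G)) * g ^ (j : ℕ)).map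
                (MulAut.conj (g ^ k))).prod := by
            rw [hC]; exact map_list_prod _ _
        _ = ((List.finRange n).map fun j : Fin n =>
              g ^ k * ((g ^ (j : ℕ))⁻¹ * ((b j : G)) * g ^ (j : ℕ)) * (g ^ k)⁻¹).prod := by
            rw [List.map_map]
            refine congrArg _ (List.map_congr_left fun j _ => ?_)
            rw [Function.comp_apply, MulAut.conj_apply]
    have hterm : ∀ j : Fin n,
        g ^ k * ((g ^ (j : ℕ))⁻¹ * ((b j : G)) * g ^ (j : ℕ)) * (g ^ k)⁻¹
          = (g ^ (((j - kk : Fin n) : ℕ)))⁻¹ * ((b j : G)) * g ^ (((j - kk : Fin n) : ℕ)) := by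
      intro j
      have hx : ((b j : G)) ∈ φ.ker := hL₀ (b j).2
      have h1 : g ^ k * ((g ^ (j : ℕ))⁻¹ * ((b j : G)) * g ^ (j : ℕ)) * (g ^ k)⁻¹
          = (g ^ (((j : ℕ) : ℤ) - k))⁻¹ * ((b j : G)) * g ^ (((j : ℕ) : ℤ) - k) := by
        group
      have h2 := perFin ((b j : G)) hx (((j : ℕ) : ℤ) - k)
      open Fin.CommRing in
      have h3 : (((((j : ℕ) : ℤ) - k : ℤ) : Fin n)) = j - kk := by
        push_cast [Fin.cast_val_eq_self]
        rw [hkk]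
      rw [h1, h2, h3]
    rw [hmapped, List.map_congr_left (fun j _ => hterm j)]
    -- now a permutation argument
    have hperm : ((List.finRange n).map fun j : Fin n => j - kk).Perm (List.finRange n) := by
      apply List.Subperm.perm_of_length_le
      · apply List.Nodup.subperm
        · exact (List.nodup_finRange n).map
            (fun x y hxy => by simpa using congrArg (· + kk) hxy)
        · intro x _; exact List.mem_finRange x
      · simp
    have hFmap : ((List.finRange n).map fun j : Fin n =>
          (g ^ (((j - kk : Fin n) : ℕ)))⁻¹ * ((b j : G)) * g ^ (((j - kk : Fin n) : ℕ)))
        = (((List.finRange n).map fun j : Fin n => j - kk).map fun i : Fin n =>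
            (g ^ (i : ℕ))⁻¹ * ((b (i + kk) : G)) * g ^ (i : ℕ)) := by
      rw [List.map_map]
      apply List.map_congr_left
      intro j _
      simp [Function.comp, sub_add_cancel]
    rw [hFmap]
    refine (hperm.map _).prod_eq' ?_
    rw [List.pairwise_map, List.pairwise_map]
    refine (List.pairwise_lt_finRange n).imp fun {j₁ j₂} hlt => ?_
    exact hcom2 (j₁ - kk) (j₂ - kk)
      (fun e => (ne_of_lt hlt) (by simpa using congrArg (· + kk) e))
      (b (j₁ - kk + kk)) (b (j₂ - kk + kk))
  calc A * B * g ^ (k + k') = A * (g ^ k * C * (g ^ k)⁻¹) * (g ^ k * g ^ k') := by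
        rw [hconjC, zpow_add]
    _ = (A * g ^ k) * (C * g ^ k') := by group
end

section
/- Let G be a group, φ : G → ℤ a surjective group homomorphism, g ∈ G with φ(g) = 1, L₀ a subgroup of ker φ, and n ≥ 1 an integer. Set Lᵢ = g^{-i} L₀ g^{i} for 0 ≤ i ≤ n−1. Assume: (1) gⁿ commutes with every element of ker φ; (2) for all i ≠ j every element of Lᵢ commutes with every element of Lⱼ, and the multiplication map L₀ × L₁ × ⋯ × L_{n−1} → ker φ is a bijection. Then every element x ∈ G admits a unique representation x = b₀ (g^{-1} b₁ g) (g^{-2} b₂ g^{2}) ⋯ (g^{-(n−1)} b_{n−1} g^{n−1}) · g^{k} with b₀, b₁, …, b_{n−1} ∈ L₀ and k ∈ ℤ. -/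
open Pointwise

/-- Let `G` be a group, `φ : G → ℤ` a surjective homomorphism, `g ∈ G`
with `φ g = 1`, `L₀ ≤ ker φ` a subgroup and `n ≥ 1`.  Let `L i = g⁻ⁱ L₀ gⁱ` for
`0 ≤ i ≤ n - 1`.  Assume (1) `g ^ n` commutes with every element of `ker φ`;
(2) the subgroups `L i`, `L j` commute elementwise for `i ≠ j` and the multiplication
map `L₀ × L₁ × ⋯ × L_{n-1} → ker φ` is a bijection.  Then every `x ∈ G` admits a unique
representation
`x = b₀ (g⁻¹ b₁ g) (g⁻² b₂ g²) ⋯ (g^{-(n-1)} b_{n-1} g^{n-1}) · g ^ k`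
with `b₀, …, b_{n-1} ∈ L₀` and `k ∈ ℤ`. -/
theorem exists_unique_wreath_representation {G : Type*} [Group G]
    (φ : G →* Multiplicative ℤ) (hφ : Function.Surjective φ)
    (g : G) (hg : φ g = Multiplicative.ofAdd 1)
    (n : ℕ) [NeZero n]
    (L₀ : Subgroup G) (hL₀ : L₀ ≤ φ.ker)
    (hgn : ∀ x ∈ φ.ker, g ^ n * x = x * g ^ n)
    (L : ℕ → Subgroup G) (hL : ∀ i, L i = MulAut.conj (g ^ i)⁻¹ • L₀)
    (hcomm : ∀ i j, i < n → j < n → i ≠ j →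
      ∀ x ∈ L i, ∀ y ∈ L j, x * y = y * x)
    (hdirect : ∀ y ∈ φ.ker, ∃! b : (i : Fin n) → L (i : ℕ),
      ((List.finRange n).map fun i : Fin n => ((b i : G))).prod = y) :
    ∀ x : G, ∃! p : (Fin n → L₀) × ℤ, x = wreathToGroup g n L₀ p := by
  classical
  have hofadd : ∀ k : ℤ, (Multiplicative.ofAdd (1:ℤ)) ^ k = Multiplicative.ofAdd k := by
    intro k; rw [← ofAdd_zsmul]; simp
  -- membership lemmas
  have hmem : ∀ (i : ℕ) (c : G), c ∈ L₀ → (g ^ i)⁻¹ * c * g ^ i ∈ L i := by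
    intro i c hc
    rw [hL]
    refine ⟨c, hc, ?_⟩
    show MulAut.conj (g ^ i)⁻¹ c = _
    rw [MulAut.conj_apply]; group
  have hmem' : ∀ (i : ℕ) (c : G), c ∈ L i → ∃ b ∈ L₀, (g ^ i)⁻¹ * b * g ^ i = c := by
    intro i c hc
    rw [hL] at hc
    obtain ⟨b, hb, rfl⟩ := hc
    refine ⟨b, hb, ?_⟩
    show _ = MulAut.conj (g ^ i)⁻¹ b
    rw [MulAut.conj_apply]; group
  have hker : ∀ (i : ℕ) (c : G), c ∈ L₀ → (g ^ i)⁻¹ * c * g ^ i ∈ φ.ker := by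
    intro i c hc
    have := (MonoidHom.normal_ker φ).conj_mem c (hL₀ hc) (g ^ i)⁻¹
    simpa using this
  have hprodker : ∀ p : (Fin n → L₀) × ℤ,
      ((List.finRange n).map fun i : Fin n =>
        (g ^ (i : ℕ))⁻¹ * ((p.1 i : G)) * g ^ (i : ℕ)).prod ∈ φ.ker := by
    intro p
    refine list_prod_mem fun a ha => ?_
    simp only [List.mem_map] at ha
    obtain ⟨i, -, rfl⟩ := ha
    exact hker i _ (p.1 i).2
  have hphi : ∀ p : (Fin n → L₀) × ℤ,
      φ (wreathToGroup g n L₀ p) = Multiplicative.ofAdd p.2 := by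
    intro p
    rw [wreathToGroup, map_mul, MonoidHom.mem_ker.mp (hprodker p), one_mul, map_zpow, hg,
      hofadd]
  intro x
  obtain ⟨k, hk⟩ : ∃ k : ℤ, φ x = Multiplicative.ofAdd k :=
    ⟨Multiplicative.toAdd (φ x), rfl⟩
  have hy : x * (g ^ k)⁻¹ ∈ φ.ker := by
    rw [MonoidHom.mem_ker, map_mul, map_inv, map_zpow, hg, hofadd, hk]
    simp
  obtain ⟨b, hb, hbu⟩ := hdirect _ hy
  choose c hc hc2 using fun i : Fin n => hmem' (i : ℕ) (b i : G) (b i).2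
  refine ⟨(fun i => ⟨c i, hc i⟩, k), ?_, ?_⟩
  · show x = wreathToGroup g n L₀ _
    rw [wreathToGroup]
    have h3 : ((List.finRange n).map fun i : Fin n =>
        (g ^ (i : ℕ))⁻¹ * (c i) * g ^ (i : ℕ)).prod = x * (g ^ k)⁻¹ := by
      rw [show (fun i : Fin n => (g ^ (i : ℕ))⁻¹ * (c i) * g ^ (i : ℕ))
        = fun i : Fin n => (b i : G) from funext hc2, hb]
    show x = ((List.finRange n).map fun i : Fin n =>
        (g ^ (i : ℕ))⁻¹ * (c i) * g ^ (i : ℕ)).prod * g ^ k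
    rw [h3]
    group
  · rintro ⟨q, m⟩ hq
    have hm : m = k := by
      have h1 := hphi (q, m)
      rw [← hq, hk] at h1
      exact (Multiplicative.ofAdd.injective h1).symm
    have hBprod : ((List.finRange n).map fun i : Fin n =>
        (((fun i : Fin n => (⟨(g ^ (i : ℕ))⁻¹ * (q i : G) * g ^ (i : ℕ),
          hmem _ _ (q i).2⟩ : L (i : ℕ))) i : G))).prod = x * (g ^ k)⁻¹ := by
      show ((List.finRange n).map fun i : Fin n =>
        (g ^ (i : ℕ))⁻¹ * (q i : G) * g ^ (i : ℕ)).prod = x * (g ^ k)⁻¹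
      rw [hq, wreathToGroup, hm]
      group
    have hBq := hbu _ hBprod
    refine Prod.ext ?_ hm
    funext i
    have h1 : (g ^ (i : ℕ))⁻¹ * (q i : G) * g ^ (i : ℕ) = (b i : G) :=
      congrArg Subtype.val (congrFun hBq i)
    have h2 : (g ^ (i : ℕ))⁻¹ * (c i) * g ^ (i : ℕ) = (b i : G) := hc2 i
    exact Subtype.ext (mul_left_cancel (mul_right_cancel (h1.trans h2.symm)))
end
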